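/- As n → ∞, ((n+1)/(2n²)) ∑_{j=1}^{n} 1/sin((2j−1)π/(2n)) = log(n)/π + (log(8/π) + γ)/π + o(1). -/

import Mathlib

open Real Filter Set

lemma L1 : Tendsto (fun x => 1/Real.sin x - 1/x) (nhdsWithin 0 (Set.Ioi 0)) (nhds 0) := by
  apply squeeze_zero' (f := fun x => 1/Real.sin x - 1/x) (g := fun x => x)
  · filter_upwards [Ioo_mem_nhdsGT one_pos] with x hx
    have h1 : Real.sin x < x := Real.sin_lt hx.1
    have h2 : 0 < Real.sin x := by
      have := Real.sin_gt_sub_cube hx.1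
      nlinarith [hx.1, hx.2, sq_nonneg x]
    rw [sub_nonneg]
    exact one_div_le_one_div_of_le h2 h1.le
  · filter_upwards [Ioo_mem_nhdsGT one_pos] with x hx
    have h3 := Real.sin_gt_sub_cube hx.1
    have h2 : (3/4) * x ≤ Real.sin x := by nlinarith [hx.1, hx.2, sq_nonneg x]
    have h2' : 0 < Real.sin x := by nlinarith [hx.1]
    rw [div_sub_div _ _ (ne_of_gt h2') (ne_of_gt hx.1),
      div_le_iff₀ (mul_pos h2' hx.1)]
    nlinarith [hx.1, hx.2, sq_nonneg x, mul_pos hx.1 hx.1]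
  · exact tendsto_id.mono_left nhdsWithin_le_nhds

noncomputable def hfun (x : ℝ) : ℝ :=
  if x ∈ Set.Ioo 0 π then 1/Real.sin x - 1/x - 1/(π - x) else -(1/π)

lemma hfun_eq {x : ℝ} (hx : x ∈ Set.Ioo 0 π) :
    hfun x = 1/Real.sin x - 1/x - 1/(π - x) := if_pos hx

lemma hfun_t0 : Tendsto hfun (nhdsWithin 0 (Set.Ioi 0)) (nhds (-(1/π))) := by
  have h2 : Tendsto (fun x : ℝ => 1/(π - x)) (nhds 0) (nhds (1/π)) := by
    have : Tendsto (fun x : ℝ => π - x) (nhds 0) (nhds (π - 0)) :=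
      (continuous_const.sub continuous_id).tendsto 0
    rw [sub_zero] at this
    exact tendsto_const_nhds.div this pi_ne_zero
  have h1 : Tendsto (fun x => 1/Real.sin x - 1/x - 1/(π - x)) (nhdsWithin 0 (Set.Ioi 0))
      (nhds (0 - 1/π)) := L1.sub (h2.mono_left nhdsWithin_le_nhds)
  rw [show -(1/π) = 0 - 1/π by ring]
  apply h1.congr'
  filter_upwards [Ioo_mem_nhdsGT pi_pos] with x hx
  exact (hfun_eq hx).symm

lemma hfun_tpi : Tendsto hfun (nhdsWithin π (Set.Iio π)) (nhds (-(1/π))) := by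
  have hmap : Tendsto (fun x : ℝ => π - x) (nhdsWithin π (Set.Iio π))
      (nhdsWithin 0 (Set.Ioi 0)) := by
    apply tendsto_nhdsWithin_of_tendsto_nhds_of_eventually_within
    · have : Tendsto (fun x : ℝ => π - x) (nhds π) (nhds (π - π)) :=
        (continuous_const.sub continuous_id).tendsto π
      rw [sub_self] at this
      exact this.mono_left nhdsWithin_le_nhds
    · exact eventually_mem_nhdsWithin.mono fun x hx => by simp [Set.mem_Iio.mp hx]
  have h1 : Tendsto (fun x => 1/Real.sin x - 1/(π - x)) (nhdsWithin π (Set.Iio π)) (nhds 0) := by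
    have := L1.comp hmap
    apply this.congr
    intro x; simp [Function.comp, Real.sin_pi_sub]
  have h2 : Tendsto (fun x : ℝ => 1/x) (nhdsWithin π (Set.Iio π)) (nhds (1/π)) :=
    ((tendsto_const_nhds.div tendsto_id pi_ne_zero)).mono_left nhdsWithin_le_nhds
  have h3 := h1.sub h2
  rw [show -(1/π) = 0 - 1/π by ring]
  apply h3.congr'
  filter_upwards [Ioo_mem_nhdsLT pi_pos] with x hx
  rw [hfun_eq hx]; ring

lemma hfun_zero : hfun 0 = -(1/π) := by simp [hfun]

lemma hfun_pi : hfun π = -(1/π) := by simp [hfun]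

lemma hfun_contOn : ContinuousOn hfun (Set.Icc 0 π) := by
  intro x hx
  rcases eq_or_lt_of_le hx.1 with h0 | h0
  · subst h0
    rw [ContinuousWithinAt, hfun_zero]
    have hsub : Set.Icc (0:ℝ) π ⊆ insert 0 (Set.Ioi 0) := by
      intro y hy
      rcases eq_or_lt_of_le hy.1 with h | h
      · exact Or.inl h.symm
      · exact Or.inr h
    refine Tendsto.mono_left ?_ ((nhdsWithin_mono _ hsub).trans_eq (nhdsWithin_insert _ _))
    rw [tendsto_sup]
    exact ⟨hfun_zero ▸ tendsto_pure_nhds hfun 0, hfun_t0⟩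
  rcases eq_or_lt_of_le hx.2 with hπ | hπ
  · subst hπ
    rw [ContinuousWithinAt, hfun_pi]
    have hsub : Set.Icc (0:ℝ) π ⊆ insert π (Set.Iio π) := by
      intro y hy
      rcases eq_or_lt_of_le hy.2 with h | h
      · exact Or.inl h
      · exact Or.inr h
    refine Tendsto.mono_left ?_ ((nhdsWithin_mono _ hsub).trans_eq (nhdsWithin_insert _ _))
    rw [tendsto_sup]
    exact ⟨hfun_pi ▸ tendsto_pure_nhds hfun π, hfun_tpi⟩
  · apply ContinuousAt.continuousWithinAt
    have hxm : x ∈ Set.Ioo 0 π := ⟨h0, hπ⟩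
    have hc : ContinuousAt (fun y => 1/Real.sin y - 1/y - 1/(π - y)) x := by
      have h1 : ContinuousAt (fun y => 1/Real.sin y) x :=
        continuousAt_const.div Real.continuous_sin.continuousAt
          (ne_of_gt (Real.sin_pos_of_mem_Ioo hxm))
      have h2 : ContinuousAt (fun y : ℝ => 1/y) x :=
        continuousAt_const.div continuousAt_id (ne_of_gt h0)
      have h3 : ContinuousAt (fun y : ℝ => 1/(π - y)) x :=
        continuousAt_const.div (continuous_const.sub continuous_id).continuousAt
          (sub_ne_zero.mpr (ne_of_gt hπ))
      exact (h1.sub h2).sub h3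
    apply hc.congr
    filter_upwards [isOpen_Ioo.mem_nhds hxm] with y hy
    exact (hfun_eq hy).symm

lemma midpoint_tendsto {f : ℝ → ℝ} (hf : ContinuousOn f (Set.Icc 0 π)) :
    Tendsto (fun n : ℕ => (π/n) * ∑ j ∈ Finset.Icc 1 n, f ((2*j-1)*π/(2*n))) atTop
      (nhds (∫ x in (0:ℝ)..π, f x)) := by
  have hunif : UniformContinuousOn f (Set.Icc 0 π) :=
    isCompact_Icc.uniformContinuousOn_of_continuous hf
  rw [Metric.tendsto_atTop]
  intro ε hε
  have hε2 : 0 < ε / (π + 1) := by positivity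
  obtain ⟨δ, hδ, hδ'⟩ := (Metric.uniformContinuousOn_iff).mp hunif (ε/(π+1)) hε2
  obtain ⟨N, hN⟩ := exists_nat_gt (π / δ)
  refine ⟨max N 1, fun n hn => ?_⟩
  have hn1 : 1 ≤ n := le_trans (le_max_right N 1) hn
  have hnN : N ≤ n := le_trans (le_max_left N 1) hn
  have npos : (0:ℝ) < n := by exact_mod_cast hn1
  -- the subinterval endpoints
  set a : ℕ → ℝ := fun k => k * π / n with ha
  have hmono : ∀ k l : ℕ, k ≤ l → a k ≤ a l := by
    intro k l hkl
    have hkl' : (k:ℝ) ≤ l := by exact_mod_cast hkl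
    simp only [ha]
    gcongr
  have hsub : ∀ k : ℕ, k < n → Set.Icc (a k) (a (k+1)) ⊆ Set.Icc 0 π := by
    intro k hk x hx
    constructor
    · refine le_trans ?_ hx.1
      have : a 0 = 0 := by simp [ha]
      rw [← this]; exact hmono 0 k (Nat.zero_le k)
    · refine le_trans hx.2 ?_
      have : a n = π := by simp only [ha]; field_simp
      rw [← this]; exact hmono (k+1) n hk
  have hint : ∀ k : ℕ, k < n → IntervalIntegrable f MeasureTheory.volume (a k) (a (k+1)) := by
    intro k hk
    apply ContinuousOn.intervalIntegrable
    rw [Set.uIcc_of_le (hmono k (k+1) (Nat.le_succ k))]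
    exact hf.mono (hsub k hk)
  have hI : (∫ x in (0:ℝ)..π, f x) = ∑ k ∈ Finset.range n, ∫ x in a k..a (k+1), f x := by
    rw [intervalIntegral.sum_integral_adjacent_intervals hint]
    have h0 : a 0 = 0 := by simp [ha]
    have hn' : a n = π := by simp only [ha]; field_simp
    rw [h0, hn']
  -- midpoints
  set c : ℕ → ℝ := fun k => f ((2*(k:ℝ)+1) * π / (2*n)) with hc
  have hmid : ∀ k ∈ Finset.range n, (π/n) * c k = ∫ _x in a k..a (k+1), c k := by
    intro k _
    rw [intervalIntegral.integral_const]
    have h1 : a (k+1) - a k = π/n := by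
      simp only [ha]; push_cast; field_simp; ring
    rw [h1, smul_eq_mul]
  have hS : (π/n) * ∑ j ∈ Finset.Icc 1 n, f ((2*(j:ℝ)-1)*π/(2*n))
      = ∑ k ∈ Finset.range n, (π/n) * c k := by
    rw [Finset.mul_sum, ← Finset.Ico_add_one_right_eq_Icc, Finset.sum_Ico_eq_sum_range]
    apply Finset.sum_congr rfl
    intro k _
    congr 2
    push_cast
    ring
  have hdiff : (π/n) * (∑ j ∈ Finset.Icc 1 n, f ((2*(j:ℝ)-1)*π/(2*n)))
        - (∫ x in (0:ℝ)..π, f x)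
      = ∑ k ∈ Finset.range n, ∫ x in a k..a (k+1), (c k - f x) := by
    rw [hS, hI, ← Finset.sum_sub_distrib]
    apply Finset.sum_congr rfl
    intro k hk
    rw [hmid k hk,
      ← intervalIntegral.integral_sub intervalIntegrable_const (hint k (Finset.mem_range.mp hk))]
  rw [Real.dist_eq, hdiff]
  have hterm : ∀ k ∈ Finset.range n,
      |∫ x in a k..a (k+1), (c k - f x)| ≤ (ε/(π+1)) * (π/n) := by
    intro k hk
    have hkn := Finset.mem_range.mp hk
    have hle : a k ≤ a (k+1) := hmono k (k+1) (Nat.le_succ k)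
    have habs : ∀ x ∈ Set.uIoc (a k) (a (k+1)), ‖c k - f x‖ ≤ ε/(π+1) := by
      intro x hx
      rw [Set.uIoc_of_le hle] at hx
      have hxI : x ∈ Set.Icc 0 π := hsub k hkn ⟨hx.1.le, hx.2⟩
      have hmI : (2*(k:ℝ)+1) * π / (2*n) ∈ Set.Icc (a k) (a (k+1)) := by
        constructor
        · simp only [ha]; rw [div_le_div_iff₀ npos (by positivity)]; push_cast; nlinarith [pi_pos]
        · simp only [ha]; rw [div_le_div_iff₀ (by positivity) npos]; push_cast; nlinarith [pi_pos]
      have hmI' : (2*(k:ℝ)+1) * π / (2*n) ∈ Set.Icc 0 π := hsub k hkn hmI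
      have hdist : dist ((2*(k:ℝ)+1) * π / (2*n)) x < δ := by
        rw [Real.dist_eq, abs_lt]
        have hwid : a (k+1) - a k = π/n := by
          simp only [ha]; push_cast; field_simp; ring
        have hhalf : (2*(k:ℝ)+1) * π / (2*n) - a k = π/(2*n) := by
          simp only [ha]; push_cast; field_simp; ring
        have hπn : π/n < δ := by
          have h1 : π < (N:ℝ) * δ := (div_lt_iff₀ hδ).mp hN
          have h2 : (N:ℝ) ≤ n := by exact_mod_cast hnN
          rw [div_lt_iff₀ npos]
          nlinarith [hδ]
        constructor
        · nlinarith [hx.2, hmI.1, hmI.2, hx.1]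
        · nlinarith [hx.2, hmI.1, hmI.2, hx.1]
      have := hδ' _ hmI' _ hxI hdist
      rw [Real.dist_eq] at this
      exact (le_of_lt this)
    have := intervalIntegral.norm_integral_le_of_norm_le_const habs
    rw [Real.norm_eq_abs] at this
    refine le_trans this ?_
    have hwid : a (k+1) - a k = π/n := by
      simp only [ha]; push_cast; field_simp; ring
    rw [hwid, abs_of_pos (by positivity)]
  calc |∑ k ∈ Finset.range n, ∫ x in a k..a (k+1), (c k - f x)|
      ≤ ∑ k ∈ Finset.range n, |∫ x in a k..a (k+1), (c k - f x)| :=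
        Finset.abs_sum_le_sum_abs _ _
    _ ≤ ∑ _k ∈ Finset.range n, (ε/(π+1)) * (π/n) := Finset.sum_le_sum hterm
    _ = (ε/(π+1)) * π := by
        rw [Finset.sum_const, Finset.card_range, nsmul_eq_mul]
        field_simp
    _ < ε := by
        rw [div_mul_eq_mul_div, div_lt_iff₀ (by positivity)]
        nlinarith [pi_pos]

-- tan x / x → 1 at 0
lemma tan_div_tendsto : Tendsto (fun x : ℝ => Real.tan x / x) (nhdsWithin 0 {(0:ℝ)}ᶜ) (nhds 1) := by
  have h : HasDerivAt Real.tan 1 0 := by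
    have := Real.hasDerivAt_tan (x := 0) (by simp)
    simpa using this
  have := hasDerivAt_iff_tendsto_slope.mp h
  apply this.congr
  intro y
  simp [slope_def_field, Real.tan_zero]

lemma tan_half_div : Tendsto (fun x : ℝ => Real.tan (x/2) / x) (nhdsWithin 0 (Set.Ioi 0)) (nhds (1/2)) := by
  have hmap : Tendsto (fun x : ℝ => x/2) (nhdsWithin 0 (Set.Ioi 0)) (nhdsWithin 0 {(0:ℝ)}ᶜ) := by
    apply tendsto_nhdsWithin_of_tendsto_nhds_of_eventually_within
    · have : Tendsto (fun x : ℝ => x/2) (nhds 0) (nhds (0/2)) := (continuous_id.div_const 2).tendsto 0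
      rw [zero_div] at this
      exact this.mono_left nhdsWithin_le_nhds
    · exact eventually_mem_nhdsWithin.mono fun x hx => by
        simp only [Set.mem_compl_iff, Set.mem_singleton_iff]
        have : (0:ℝ) < x := hx
        positivity
  have h1 := (tan_div_tendsto.comp hmap).div_const 2
  rw [show (1:ℝ)/2 = 1/2 by norm_num] at h1 ⊢
  apply h1.congr'
  filter_upwards [eventually_mem_nhdsWithin] with x hx
  have hx' : (0:ℝ) < x := hx
  simp only [Function.comp_apply]
  field_simp

lemma integral_hfun : ∫ x in (0:ℝ)..π, hfun x = 2 * Real.log 2 - 2 * Real.log π := by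
  have hint : IntervalIntegrable hfun MeasureTheory.volume 0 π := by
    apply ContinuousOn.intervalIntegrable
    rw [Set.uIcc_of_le pi_pos.le]
    exact hfun_contOn
  have hderiv : ∀ x ∈ Set.Ioo 0 π,
      HasDerivAt (fun x => Real.log (Real.tan (x/2)) - Real.log x + Real.log (π - x)) (hfun x) x := by
    intro x hx
    have hx2 : x/2 ∈ Set.Ioo 0 (π/2) := ⟨by linarith [hx.1], by linarith [hx.2]⟩
    have hcos : 0 < Real.cos (x/2) := Real.cos_pos_of_mem_Ioo ⟨by linarith [pi_pos, hx2.1], hx2.2⟩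
    have hsin2 : 0 < Real.sin (x/2) := Real.sin_pos_of_pos_of_lt_pi hx2.1 (by linarith [pi_pos, hx2.2])
    have htan : 0 < Real.tan (x/2) := Real.tan_pos_of_pos_of_lt_pi_div_two hx2.1 hx2.2
    have d1 : HasDerivAt (fun y : ℝ => Real.tan (y/2)) (1 / Real.cos (x/2) ^ 2 * (1/2)) x := by
      have ht := Real.hasDerivAt_tan (x := x/2) (ne_of_gt hcos)
      have hd : HasDerivAt (fun y : ℝ => y/2) (1/2) x := (hasDerivAt_id x).div_const 2 |>.congr_deriv (by norm_num)
      exact ht.comp x hd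
    have d1' : HasDerivAt (fun y : ℝ => Real.log (Real.tan (y/2)))
        ((1 / Real.cos (x/2) ^ 2 * (1/2)) / Real.tan (x/2)) x := d1.log (ne_of_gt htan)
    have d2 : HasDerivAt Real.log x⁻¹ x := Real.hasDerivAt_log (ne_of_gt hx.1)
    have d3 : HasDerivAt (fun y : ℝ => Real.log (π - y)) (-(π - x)⁻¹) x := by
      have hd : HasDerivAt (fun y : ℝ => π - y) (-1) x := by
        simpa using (hasDerivAt_id x).const_sub π
      have := hd.log (sub_ne_zero.mpr (ne_of_gt hx.2))
      convert this using 1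
      field_simp
    have := (d1'.sub d2).add d3
    refine this.congr_deriv ?_
    rw [hfun_eq hx]
    have hs : Real.sin x = 2 * Real.sin (x/2) * Real.cos (x/2) := by
      rw [show x = 2 * (x/2) by ring, Real.sin_two_mul]
      ring_nf
    rw [Real.tan_eq_sin_div_cos]
    rw [hs]
    field_simp
    ring
  have ha : Tendsto (fun x => Real.log (Real.tan (x/2)) - Real.log x + Real.log (π - x))
      (nhdsWithin 0 (Set.Ioi 0)) (nhds (Real.log (1/2) + Real.log π)) := by
    have h1 : Tendsto (fun x : ℝ => Real.log (Real.tan (x/2) / x)) (nhdsWithin 0 (Set.Ioi 0))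
        (nhds (Real.log (1/2))) := tan_half_div.log (by norm_num)
    have h2 : Tendsto (fun x : ℝ => Real.log (π - x)) (nhdsWithin 0 (Set.Ioi 0)) (nhds (Real.log π)) := by
      have : Tendsto (fun x : ℝ => π - x) (nhds 0) (nhds (π - 0)) :=
        (continuous_const.sub continuous_id).tendsto 0
      rw [sub_zero] at this
      exact (this.log pi_ne_zero).mono_left nhdsWithin_le_nhds
    have := h1.add h2
    apply this.congr'
    filter_upwards [Ioo_mem_nhdsGT pi_pos] with x hx
    have hx2 : x/2 ∈ Set.Ioo 0 (π/2) := ⟨by linarith [hx.1], by linarith [hx.2]⟩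
    have htan : 0 < Real.tan (x/2) := Real.tan_pos_of_pos_of_lt_pi_div_two hx2.1 hx2.2
    rw [Real.log_div (ne_of_gt htan) (ne_of_gt hx.1)]
  have hb : Tendsto (fun x => Real.log (Real.tan (x/2)) - Real.log x + Real.log (π - x))
      (nhdsWithin π (Set.Iio π)) (nhds (Real.log 2 - Real.log π)) := by
    have hmap : Tendsto (fun x : ℝ => π - x) (nhdsWithin π (Set.Iio π))
        (nhdsWithin 0 (Set.Ioi 0)) := by
      apply tendsto_nhdsWithin_of_tendsto_nhds_of_eventually_within
      · have : Tendsto (fun x : ℝ => π - x) (nhds π) (nhds (π - π)) :=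
          (continuous_const.sub continuous_id).tendsto π
        rw [sub_self] at this
        exact this.mono_left nhdsWithin_le_nhds
      · exact eventually_mem_nhdsWithin.mono fun x hx => by simp [Set.mem_Iio.mp hx]
    have h0 : Tendsto (fun x : ℝ => (Real.tan (x/2) / x)⁻¹) (nhdsWithin 0 (Set.Ioi 0))
        (nhds 2) := by
      have h := tan_half_div.inv₀ (show (1:ℝ)/2 ≠ 0 by norm_num)
      rw [show ((1:ℝ)/2)⁻¹ = 2 by norm_num] at h
      exact h
    have h1 : Tendsto (fun x : ℝ => Real.tan (x/2) * (π - x)) (nhdsWithin π (Set.Iio π))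
        (nhds 2) := by
      have := h0.comp hmap
      apply this.congr'
      filter_upwards [Ioo_mem_nhdsLT pi_pos] with x hx
      have hx2 : x/2 ∈ Set.Ioo 0 (π/2) := ⟨by linarith [hx.1], by linarith [hx.2]⟩
      have htan : 0 < Real.tan (x/2) := Real.tan_pos_of_pos_of_lt_pi_div_two hx2.1 hx2.2
      have key : Real.tan ((π - x)/2) = (Real.tan (x/2))⁻¹ := by
        rw [show (π - x)/2 = π/2 - x/2 by ring, Real.tan_pi_div_two_sub]
      simp only [Function.comp]
      rw [key, inv_div]
      field_simp
    have h1' : Tendsto (fun x : ℝ => Real.log (Real.tan (x/2) * (π - x)))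
        (nhdsWithin π (Set.Iio π)) (nhds (Real.log 2)) := h1.log two_ne_zero
    have h2 : Tendsto (fun x : ℝ => Real.log x) (nhdsWithin π (Set.Iio π)) (nhds (Real.log π)) :=
      ((Real.continuousAt_log pi_ne_zero).tendsto).mono_left nhdsWithin_le_nhds
    have := h1'.sub h2
    apply this.congr'
    filter_upwards [Ioo_mem_nhdsLT pi_pos] with x hx
    have hx2 : x/2 ∈ Set.Ioo 0 (π/2) := ⟨by linarith [hx.1], by linarith [hx.2]⟩
    have htan : 0 < Real.tan (x/2) := Real.tan_pos_of_pos_of_lt_pi_div_two hx2.1 hx2.2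
    rw [Real.log_mul (ne_of_gt htan) (sub_ne_zero.mpr (ne_of_gt hx.2))]
    ring
  have := intervalIntegral.integral_eq_sub_of_hasDerivAt_of_tendsto pi_pos hderiv hint ha hb
  rw [this]
  rw [show (1:ℝ)/2 = 2⁻¹ by norm_num, Real.log_inv]
  ring

lemma odd_sum (n : ℕ) : ∑ j ∈ Finset.Icc 1 n, (1:ℝ)/(2*(j:ℝ)-1)
    = (harmonic (2*n) : ℝ) - (harmonic n : ℝ)/2 := by
  induction n with
  | zero => simp
  | succ n ih =>
    rw [Finset.sum_Icc_succ_top (Nat.one_le_iff_ne_zero.mpr (Nat.succ_ne_zero n)), ih]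
    have h1 : 2*(n+1) = (2*n+1)+1 := by ring
    rw [h1, harmonic_succ, harmonic_succ, harmonic_succ]
    push_cast
    have h2 : (2*((n:ℝ)+1)-1) ≠ 0 := by
      have := n.cast_nonneg (α := ℝ)
      intro h; nlinarith
    field_simp
    ring

lemma sum_identity (n : ℕ) (hn : 1 ≤ n) :
    ∑ j ∈ Finset.Icc 1 n, 1 / Real.sin ((2*(j:ℝ)-1) * π / (2*n))
      = (4*n/π) * ((harmonic (2*n) : ℝ) - (harmonic n : ℝ)/2)
        + ∑ j ∈ Finset.Icc 1 n, hfun ((2*(j:ℝ)-1) * π / (2*n)) := by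
  have npos : (0:ℝ) < n := by exact_mod_cast hn
  have hterm : ∀ j ∈ Finset.Icc 1 n,
      1 / Real.sin ((2*(j:ℝ)-1) * π / (2*n))
        = hfun ((2*(j:ℝ)-1) * π / (2*n))
          + (2*n/π) * (1/(2*(j:ℝ)-1)) + (2*n/π) * (1/(2*((n+1-j : ℕ):ℝ)-1)) := by
    intro j hj
    rw [Finset.mem_Icc] at hj
    have hj1 : (1:ℝ) ≤ j := by exact_mod_cast hj.1
    have hjn : (j:ℝ) ≤ n := by exact_mod_cast hj.2
    have hmem : (2*(j:ℝ)-1) * π / (2*n) ∈ Set.Ioo 0 π := by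
      constructor
      · apply div_pos (by nlinarith [pi_pos]) (by positivity)
      · rw [div_lt_iff₀ (by positivity)]
        nlinarith [pi_pos]
    rw [hfun_eq hmem]
    have hc : ((n+1-j : ℕ):ℝ) = (n:ℝ) + 1 - j := by
      have : j ≤ n + 1 := le_trans hj.2 (Nat.le_succ n)
      push_cast [Nat.cast_sub this]
      ring
    rw [hc]
    have h1 : (2*(j:ℝ)-1) ≠ 0 := by nlinarith
    have h2 : (2*((n:ℝ)+1-j)-1) ≠ 0 := by nlinarith
    have e1 : 1/((2*(j:ℝ)-1) * π / (2*(n:ℝ))) = (2*(n:ℝ)/π) * (1/(2*(j:ℝ)-1)) := by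
      field_simp
    have e2 : 1/(π - (2*(j:ℝ)-1) * π / (2*(n:ℝ))) = (2*(n:ℝ)/π) * (1/(2*((n:ℝ)+1-j)-1)) := by
      rw [show π - (2*(j:ℝ)-1) * π / (2*(n:ℝ)) = π * (2*((n:ℝ)+1-j)-1) / (2*(n:ℝ)) by
        field_simp; ring]
      field_simp
    rw [e1, e2]
    ring
  rw [Finset.sum_congr rfl hterm]
  rw [Finset.sum_add_distrib, Finset.sum_add_distrib, ← Finset.mul_sum, ← Finset.mul_sum]
  have hrefl : ∑ j ∈ Finset.Icc 1 n, (1:ℝ)/(2*((n+1-j : ℕ):ℝ)-1)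
      = ∑ j ∈ Finset.Icc 1 n, (1:ℝ)/(2*(j:ℝ)-1) := by
    apply Finset.sum_nbij' (i := fun j => n+1-j) (j := fun j => n+1-j)
    · intro a ha; rw [Finset.mem_Icc] at *; omega
    · intro a ha; rw [Finset.mem_Icc] at *; omega
    · intro a ha; rw [Finset.mem_Icc] at ha; omega
    · intro a ha; rw [Finset.mem_Icc] at ha; omega
    · intro a ha; rfl
  rw [hrefl, show ((harmonic (2*n):ℝ) - (harmonic n : ℝ)/2)
      = ∑ j ∈ Finset.Icc 1 n, (1:ℝ)/(2*(j:ℝ)-1) from (odd_sum n).symm]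
  ring

theorem mathias_lower_bound_asymptotic :
    Tendsto (fun n : ℕ =>
        (((n : ℝ) + 1) / (2 * (n : ℝ) ^ 2)) *
            ∑ j ∈ Finset.Icc 1 n, 1 / Real.sin ((2 * (j : ℝ) - 1) * π / (2 * n)) -
          (Real.log n / π + (Real.log (8 / π) + Real.eulerMascheroniConstant) / π))
      atTop (nhds 0) := by
  set γ := Real.eulerMascheroniConstant with hγ
  set C : ℝ := (Real.log (8 / π) + γ) / π with hC
  -- component limits
  have h2n : Tendsto (fun n : ℕ => 2*n) atTop atTop :=
    Filter.tendsto_atTop_atTop.mpr fun b => ⟨b, fun a ha => by omega⟩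
  have hu : Tendsto (fun n : ℕ => (harmonic (2*n) : ℝ) - Real.log ((2*n : ℕ) : ℝ)) atTop
      (nhds γ) := Real.tendsto_harmonic_sub_log.comp h2n
  have hv : Tendsto (fun n : ℕ => (harmonic n : ℝ) - Real.log n) atTop (nhds γ) :=
    Real.tendsto_harmonic_sub_log
  have hw : Tendsto (fun n : ℕ => (π/n) * ∑ j ∈ Finset.Icc 1 n, hfun ((2*(j:ℝ)-1)*π/(2*n)))
      atTop (nhds (2 * Real.log 2 - 2 * Real.log π)) := by
    have := midpoint_tendsto hfun_contOn
    rwa [integral_hfun] at this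
  set w : ℕ → ℝ := fun n => (π/n) * ∑ j ∈ Finset.Icc 1 n, hfun ((2*(j:ℝ)-1)*π/(2*n)) with hwdef
  set P : ℕ → ℝ := fun n =>
    (2/π) * ((harmonic (2*n) : ℝ) - Real.log ((2*n : ℕ) : ℝ))
      - (1/π) * ((harmonic n : ℝ) - Real.log n)
      + (2/π) * Real.log 2 + (1/(2*π)) * w n with hPdef
  have hP : Tendsto P atTop (nhds C) := by
    have := (((hu.const_mul (2/π)).sub (hv.const_mul (1/π))).add_const ((2/π) * Real.log 2)).add
      (hw.const_mul (1/(2*π)))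
    convert this using 2
    rw [hC]
    have h8 : Real.log (8/π) = 3 * Real.log 2 - Real.log π := by
      rw [Real.log_div (by norm_num) pi_ne_zero, show (8:ℝ) = 2^3 by norm_num,
        Real.log_pow]
      push_cast; ring
    rw [h8]
    field_simp
    ring
  -- auxiliary null sequences
  have hinv : Tendsto (fun n : ℕ => ((n:ℝ))⁻¹) atTop (nhds 0) :=
    tendsto_inv_atTop_zero.comp tendsto_natCast_atTop_atTop
  have hlogn : Tendsto (fun n : ℕ => Real.log n / n) atTop (nhds 0) :=
    (Real.isLittleO_log_id_atTop.tendsto_div_nhds_zero).comp tendsto_natCast_atTop_atTop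
  have hmain : Tendsto (fun n : ℕ => (P n - C) + P n * ((n:ℝ))⁻¹ + (Real.log n / n) * (1/π))
      atTop (nhds 0) := by
    have h1 : Tendsto (fun n : ℕ => P n - C) atTop (nhds 0) := by
      simpa using hP.sub_const C
    have h2 : Tendsto (fun n : ℕ => P n * ((n:ℝ))⁻¹) atTop (nhds 0) := by
      simpa using hP.mul hinv
    have h3 : Tendsto (fun n : ℕ => (Real.log n / n) * (1/π)) atTop (nhds 0) := by
      simpa using hlogn.mul_const (1/π)
    simpa using (h1.add h2).add h3
  apply hmain.congr'
  filter_upwards [eventually_ge_atTop 1] with n hn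
  have npos : (0:ℝ) < n := by exact_mod_cast hn
  have hlog2n : Real.log (2*(n:ℝ)) = Real.log 2 + Real.log n :=
    Real.log_mul two_ne_zero (ne_of_gt npos)
  rw [sum_identity n hn]
  have hcast : ((2*n : ℕ) : ℝ) = 2*(n:ℝ) := by push_cast; ring
  simp only [hPdef, hwdef, hcast, hlog2n]
  have hπ := pi_ne_zero
  field_simp
  ring
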